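/- Let q > 2 be a prime power with q ≡ 2 (mod 3). Then there exists A in the group N of norm-1 elements of F_{q^3}^*, A ≠ 1, such that A = B_1·C_1 = B_2·C_2 where B_1 ≠ C_1 are distinct roots of h_1(X) = X^{q+1} + X + 1 and B_2 ≠ C_2 are distinct roots of h_2(X) = X^{q+1} + X^q + 1. -/

import Mathlib

open Polynomial

section SixteenHelpers
variable {F : Type} [Field F] [Fintype F]




private lemma three_ne (q : ℕ) (hq2 : 2 < q) (hq3 : q % 3 = 2)
    (hcard : Fintype.card F = q ^ 3) : (3 : F) ≠ 0 := by
  intro h3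
  have hc : ((Fintype.card F : ℕ) : F) = 0 := FiniteField.cast_card_eq_zero F
  rw [hcard] at hc
  have h27 : 27 ≤ q ^ 3 := by
    calc (27:ℕ) = 3^3 := by norm_num
    _ ≤ q^3 := Nat.pow_le_pow_left (by omega) 3
  have hm : q ^ 3 % 3 = 2 := by rw [Nat.pow_mod, hq3]
  obtain ⟨m, hmeq⟩ : ∃ m, q ^ 3 = 3 * m + 2 := ⟨q^3/3, by omega⟩
  rw [hmeq] at hc
  push_cast at hc
  have h2 : (2 : F) = 0 := by linear_combination hc - (m : F) * h3
  have : (1 : F) = 0 := by linear_combination h3 - h2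
  exact one_ne_zero this

private lemma nocube (q : ℕ) (hq2 : 2 < q) (hq3 : q % 3 = 2)
    (hcard : Fintype.card F = q ^ 3) (x : F) : x ^ 2 + x + 1 ≠ 0 := by
  intro h
  have hx0 : x ≠ 0 := by
    rintro rfl; simp at h
  have hx1 : x ≠ 1 := by
    rintro rfl
    exact three_ne q hq2 hq3 hcard (by linear_combination h)
  have h3 : x ^ 3 = 1 := by linear_combination (x - 1) * h
  have hcd : x ^ (q ^ 3 - 1) = 1 := by
    rw [← hcard]; exact FiniteField.pow_card_sub_one_eq_one x hx0
  have hd1 : orderOf x ∣ 3 := orderOf_dvd_of_pow_eq_one h3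
  have hd2 : orderOf x ∣ q ^ 3 - 1 := orderOf_dvd_of_pow_eq_one hcd
  have h27 : 27 ≤ q ^ 3 := by
    calc (27:ℕ) = 3^3 := by norm_num
    _ ≤ q^3 := Nat.pow_le_pow_left (by omega) 3
  have hm : q ^ 3 % 3 = 2 := by rw [Nat.pow_mod, hq3]
  have hgcd : Nat.gcd 3 (q ^ 3 - 1) = 1 := by
    have : ¬ (3 ∣ q ^ 3 - 1) := by omega
    exact (Nat.Prime.coprime_iff_not_dvd (by norm_num)).mpr this
  have : orderOf x ∣ 1 := hgcd ▸ Nat.dvd_gcd hd1 hd2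
  exact hx1 (orderOf_eq_one_iff.mp (Nat.dvd_one.mp this))

private lemma frob_add (q : ℕ) (hq : IsPrimePow q) (hcard : Fintype.card F = q ^ 3) :
    ∀ x y : F, (x + y) ^ q = x ^ q + y ^ q := by
  obtain ⟨p, k, hp, hk, rfl⟩ := hq
  have hpp : Nat.Prime p := Nat.prime_iff.mpr hp
  have hcast : ((p : F)) = 0 := by
    have hc : ((Fintype.card F : ℕ) : F) = 0 := FiniteField.cast_card_eq_zero F
    rw [hcard] at hc
    push_cast at hc
    have h0 : (p : F) ^ (k * 3) = 0 := by rw [pow_mul]; exact hc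
    exact pow_eq_zero_iff (Nat.mul_ne_zero (by omega) (by norm_num)) |>.mp h0
  haveI : CharP F (ringChar F) := ringChar.charP F
  have hdvd : ringChar F ∣ p := (CharP.cast_eq_zero_iff F (ringChar F) p).mp hcast
  have hne1 : ringChar F ≠ 1 := by
    intro h1
    have := CharP.cast_eq_zero F (ringChar F)
    rw [h1] at this
    exact one_ne_zero (by exact_mod_cast this)
  have hrc : ringChar F = p := ((Nat.Prime.eq_one_or_self_of_dvd hpp _ hdvd).resolve_left hne1)
  haveI : CharP F p := hrc ▸ ringChar.charP F
  haveI : Fact p.Prime := ⟨hpp⟩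
  intro x y
  exact add_pow_char_pow x y p k

private lemma norm_one (q : ℕ) (hq0 : q ≠ 0) (hfrob : ∀ x y : F, (x + y) ^ q = x ^ q + y ^ q)
    (R : F) (hR : R ^ (q + 1) + R + 1 = 0) : R ^ (1 + q + q ^ 2) = 1 := by
  have hS : (R ^ q) ^ (q + 1) + R ^ q + 1 = 0 := by
    have := congrArg (· ^ q) hR
    rw [hfrob, hfrob, one_pow, zero_pow hq0] at this
    rw [← pow_right_comm] at this
    exact this
  have hR' : R ^ q * R + R + 1 = 0 := by rw [← pow_succ] ; exact hR
  have hS' : (R ^ q) ^ q * R ^ q + R ^ q + 1 = 0 := by rw [← pow_succ]; exact hS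
  have key : R * R ^ q * (R ^ q) ^ q = 1 := by linear_combination R * hS' - hR'
  calc R ^ (1 + q + q ^ 2) = R ^ 1 * R ^ q * R ^ (q * q) := by
        rw [← pow_add, ← pow_add]; ring_nf
    _ = R * R ^ q * (R ^ q) ^ q := by rw [pow_one, pow_mul]
    _ = 1 := key

private lemma h2_root (q : ℕ) (B : F) (hB0 : B ≠ 0) (hB : B ^ (q + 1) + B + 1 = 0) :
    (B⁻¹) ^ (q + 1) + (B⁻¹) ^ q + 1 = 0 := by
  have hq : B ^ (q+1) ≠ 0 := pow_ne_zero _ hB0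
  have hqq : B ^ q ≠ 0 := pow_ne_zero _ hB0
  rw [inv_pow, inv_pow]
  rw [pow_succ] at hB ⊢
  field_simp
  linear_combination hB




private lemma exists_good (q : ℕ) (hq2 : 2 < q) (hcard : Fintype.card F = q ^ 3)
    (hfrob : ∀ x y : F, (x + y) ^ q = x ^ q + y ^ q)
    (G : Polynomial F) (hG0 : G ≠ 0) (hdeg : q * G.natDegree < q ^ 3) :
    ∃ u : F, u + u ^ q + (u ^ q) ^ q = 0 ∧ Polynomial.eval u G ≠ 0 := by
  classical
  have hq0 : q ≠ 0 := by omega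
  have hneg : ∀ x : F, (-x) ^ q = -(x ^ q) := by
    intro x
    have h := hfrob x (-x)
    rw [add_neg_cancel, zero_pow hq0] at h
    linear_combination -h
  have hsub : ∀ x y : F, (x - y) ^ q = x ^ q - y ^ q := by
    intro x y
    rw [sub_eq_add_neg, hfrob, hneg, ← sub_eq_add_neg]
  by_contra hcon
  push_neg at hcon
  have htr : ∀ v : F, (v - v ^ q) + (v - v ^ q) ^ q + ((v - v ^ q) ^ q) ^ q = 0 := by
    intro v
    have hv3 : ((v ^ q) ^ q) ^ q = v := by
      rw [← pow_mul, ← pow_mul]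
      rw [show q * (q * q) = q ^ 3 by ring, ← hcard, FiniteField.pow_card]
    rw [hsub, hsub]
    linear_combination -hv3
  set f : F → F := fun v => v - v ^ q with hf
  have hTcard : (Finset.univ.filter (fun x : F => x ^ q = x)).card ≤ q := by
    set P : Polynomial F := X ^ q - X with hP
    have hP0 : P ≠ 0 := by
      intro h
      have hXX : (X : F[X]) ^ q = X := by rw [← sub_eq_zero]; exact h
      have hd := congrArg Polynomial.natDegree hXX
      rw [Polynomial.natDegree_X_pow, Polynomial.natDegree_X] at hd
      omega
    have hsubset : (Finset.univ.filter (fun x : F => x ^ q = x)) ⊆ P.roots.toFinset := by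
      intro x hx
      rw [Finset.mem_filter] at hx
      rw [Multiset.mem_toFinset, Polynomial.mem_roots hP0]
      simp [hP, Polynomial.IsRoot, sub_eq_zero, hx.2]
    calc (Finset.univ.filter (fun x : F => x ^ q = x)).card
        ≤ P.roots.toFinset.card := Finset.card_le_card hsubset
      _ ≤ Multiset.card P.roots := Multiset.toFinset_card_le _
      _ ≤ P.natDegree := Polynomial.card_roots' P
      _ ≤ q := by
          apply le_trans (Polynomial.natDegree_sub_le _ _)
          rw [Polynomial.natDegree_X_pow, Polynomial.natDegree_X]
          omega
  have hfiber : ∀ a ∈ Finset.univ.image f, (Finset.univ.filter fun v => f v = a).card ≤ q := by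
    intro a _
    rcases (Finset.univ.filter fun v => f v = a).eq_empty_or_nonempty with he | ⟨v₀, hv₀⟩
    · rw [he]; simpa using Nat.zero_le q
    · rw [Finset.mem_filter] at hv₀
      refine le_trans (Finset.card_le_card_of_injOn (fun v => v - v₀) ?_ ?_) hTcard
      · intro v hv
        rw [Finset.mem_coe, Finset.mem_filter] at hv
        rw [Finset.mem_coe, Finset.mem_filter]
        refine ⟨Finset.mem_univ _, ?_⟩
        have h1 : v - v ^ q = v₀ - v₀ ^ q := by
          have h2 : f v = f v₀ := hv.2.trans hv₀.2.symm
          simpa only [hf] using h2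
        rw [hsub]
        linear_combination -h1
      · intro a _ b _ h
        exact sub_left_injective h
  have hcards := Finset.card_le_mul_card_image (f := f) Finset.univ q hfiber
  have himage : (Finset.univ.image f) ⊆ G.roots.toFinset := by
    intro a ha
    obtain ⟨v, _, rfl⟩ := Finset.mem_image.mp ha
    rw [Multiset.mem_toFinset, Polynomial.mem_roots hG0]
    exact hcon _ (htr v)
  have h1 : (Finset.univ.image f).card ≤ G.natDegree :=
    le_trans (Finset.card_le_card himage)
      (le_trans (Multiset.toFinset_card_le _) (Polynomial.card_roots' G))
  rw [Finset.card_univ, hcard] at hcards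
  have hfin : q ^ 3 ≤ q * G.natDegree :=
    le_trans hcards (Nat.mul_le_mul_left q h1)
  omega

private lemma root_of_tr (q : ℕ) (hq2 : 2 < q) (u : F) (hu : u ≠ 0)
    (htr : u + u ^ q + (u ^ q) ^ q = 0) :
    (u ^ (q - 1)) ^ (q + 1) + u ^ (q - 1) + 1 = 0 := by
  obtain ⟨r, rfl⟩ : ∃ r, q = r + 3 := ⟨q - 3, by omega⟩
  have e1 : r + 3 - 1 = r + 2 := by omega
  rw [e1]
  have key : ((u ^ (r + 2)) ^ (r + 3 + 1) + u ^ (r + 2) + 1) * u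
      = u + u ^ (r + 3) + (u ^ (r + 3)) ^ (r + 3) := by ring
  have h0 : ((u ^ (r + 2)) ^ (r + 3 + 1) + u ^ (r + 2) + 1) * u = 0 := by rw [key, htr]
  exact (mul_eq_zero.mp h0).resolve_right hu


end SixteenHelpers

theorem stmt_16 (q : ℕ) (hq : IsPrimePow q) (hq2 : 2 < q) (hq3 : q % 3 = 2)
    (F : Type) [Field F] [Fintype F] (hcard : Fintype.card F = q ^ 3) :
    ∃ A B₁ C₁ B₂ C₂ : F,
      A ^ (1 + q + q ^ 2) = 1 ∧ A ≠ 1 ∧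
      B₁ ≠ C₁ ∧ B₁ ^ (q + 1) + B₁ + 1 = 0 ∧ C₁ ^ (q + 1) + C₁ + 1 = 0 ∧ A = B₁ * C₁ ∧
      B₂ ≠ C₂ ∧ B₂ ^ (q + 1) + B₂ ^ q + 1 = 0 ∧ C₂ ^ (q + 1) + C₂ ^ q + 1 = 0 ∧
      A = B₂ * C₂ := by
  classical
  have hq0 : q ≠ 0 := by omega
  have hfrob := frob_add q hq hcard
  have h3F : (3 : F) ≠ 0 := three_ne q hq2 hq3 hcard
  have hnocube : ∀ x : F, x ^ 2 + x + 1 ≠ 0 := nocube q hq2 hq3 hcard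
  have hnegq : ∀ x : F, (-x) ^ q = -(x ^ q) := by
    intro x
    have h := hfrob x (-x)
    rw [add_neg_cancel, zero_pow hq0] at h
    linear_combination -h
  have h2q : (2 : F) ^ q = 2 := by
    have h := hfrob 1 1
    norm_num at h
    exact h
  have hfrootq : ∀ R : F, R ^ (q + 1) + R + 1 = 0 → (R ^ q) ^ (q + 1) + R ^ q + 1 = 0 := by
    intro R hR
    have h := congrArg (· ^ q) hR
    rw [hfrob, hfrob, one_pow, zero_pow hq0, pow_right_comm] at h
    exact h
  by_cases h2F : (2 : F) = 0
  · -- characteristic 2 case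
    have hqe : q % 2 = 0 := by
      by_contra hodd
      have h1 : q % 2 = 1 := by omega
      have hm : q ^ 3 % 2 = 1 := by rw [Nat.pow_mod, h1]
      have hc : ((Fintype.card F : ℕ) : F) = 0 := FiniteField.cast_card_eq_zero F
      rw [hcard] at hc
      obtain ⟨m, hmeq⟩ : ∃ m, q ^ 3 = 2 * m + 1 := ⟨q ^ 3 / 2, by omega⟩
      rw [hmeq] at hc
      push_cast at hc
      have h1F : (1 : F) = 0 := by linear_combination hc - (m : F) * h2F
      exact one_ne_zero h1F
    have hq8 : 8 ≤ q := by omega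
    have h30 : 3 * (q - 1) ≠ 0 := by omega
    have h20 : 2 * (q - 1) ≠ 0 := by omega
    have h10 : q - 1 ≠ 0 := by omega
    -- avoidance polynomial
    have hc1 : (X ^ (3 * (q - 1)) + X ^ (q - 1) + 1 : Polynomial F) ≠ 0 := by
      intro h
      have he : Polynomial.eval 0 (X ^ (3 * (q - 1)) + X ^ (q - 1) + 1 : Polynomial F) = 1 := by
        simp [zero_pow h30, zero_pow h10]
      rw [h] at he
      simp at he
    have hc2 : (X ^ (3 * (q - 1)) + X ^ (2 * (q - 1)) + 1 : Polynomial F) ≠ 0 := by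
      intro h
      have he : Polynomial.eval 0 (X ^ (3 * (q - 1)) + X ^ (2 * (q - 1)) + 1 : Polynomial F) = 1 := by
        simp [zero_pow h30, zero_pow h20]
      rw [h] at he
      simp at he
    have hG0 : (X * (X ^ (3 * (q - 1)) + X ^ (q - 1) + 1) *
        (X ^ (3 * (q - 1)) + X ^ (2 * (q - 1)) + 1) : Polynomial F) ≠ 0 :=
      mul_ne_zero (mul_ne_zero X_ne_zero hc1) hc2
    have hP1deg : (X ^ (3 * (q - 1)) + X ^ (q - 1) + 1 : Polynomial F).natDegree ≤ 3 * (q - 1) := by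
      refine le_trans (natDegree_add_le _ _)
        (max_le (le_trans (natDegree_add_le _ _) (max_le ?_ ?_)) ?_)
      · exact le_of_eq (natDegree_X_pow _)
      · rw [natDegree_X_pow]; omega
      · simp
    have hP2deg : (X ^ (3 * (q - 1)) + X ^ (2 * (q - 1)) + 1 : Polynomial F).natDegree
        ≤ 3 * (q - 1) := by
      refine le_trans (natDegree_add_le _ _)
        (max_le (le_trans (natDegree_add_le _ _) (max_le ?_ ?_)) ?_)
      · exact le_of_eq (natDegree_X_pow _)
      · rw [natDegree_X_pow]; omega
      · simp
    have hGdeg : (X * (X ^ (3 * (q - 1)) + X ^ (q - 1) + 1) *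
        (X ^ (3 * (q - 1)) + X ^ (2 * (q - 1)) + 1) : Polynomial F).natDegree ≤ 6 * q := by
      refine le_trans (natDegree_mul_le) (le_trans (add_le_add
        (le_trans natDegree_mul_le (add_le_add natDegree_X_le hP1deg)) hP2deg) ?_)
      omega
    have hdeg : q * (X * (X ^ (3 * (q - 1)) + X ^ (q - 1) + 1) *
        (X ^ (3 * (q - 1)) + X ^ (2 * (q - 1)) + 1) : Polynomial F).natDegree < q ^ 3 := by
      have hqq : 0 < q * q := by positivity
      calc q * (X * (X ^ (3 * (q - 1)) + X ^ (q - 1) + 1) *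
          (X ^ (3 * (q - 1)) + X ^ (2 * (q - 1)) + 1) : Polynomial F).natDegree
          ≤ q * (6 * q) := Nat.mul_le_mul_left _ hGdeg
        _ = 6 * (q * q) := by ring
        _ < 8 * (q * q) := by omega
        _ ≤ q * (q * q) := Nat.mul_le_mul_right _ hq8
        _ = q ^ 3 := by ring
    obtain ⟨u, htr, heval⟩ := exists_good q hq2 hcard hfrob _ hG0 hdeg
    simp only [eval_mul, eval_add, eval_pow, eval_X, eval_one, ne_eq, mul_eq_zero,
      not_or] at heval
    obtain ⟨⟨hu0, hbad1u⟩, hbad2u⟩ := heval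
    have hB := root_of_tr q hq2 u hu0 htr
    set B : F := u ^ (q - 1) with hBdef
    have hB0 : B ≠ 0 := pow_ne_zero _ hu0
    have hbad1 : B ^ 3 + B + 1 ≠ 0 := by
      intro h
      apply hbad1u
      have e : u ^ (3 * (q - 1)) = B ^ 3 := by rw [hBdef, ← pow_mul, Nat.mul_comm]
      rw [e]
      exact h
    have hbad2 : B ^ 3 + B ^ 2 + 1 ≠ 0 := by
      intro h
      apply hbad2u
      have e : u ^ (2 * (q - 1)) = B ^ 2 := by rw [hBdef, ← pow_mul, Nat.mul_comm]
      have e3 : u ^ (3 * (q - 1)) = B ^ 3 := by rw [hBdef, ← pow_mul, Nat.mul_comm]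
      rw [e, e3]
      exact h
    have hBne1 : B ≠ 1 := by
      intro h
      rw [h] at hB
      exact h3F (by linear_combination hB)
    have hB1ne : B + 1 ≠ 0 := by
      intro h
      exact hBne1 (by linear_combination h - h2F)
    have hB' : B ^ q * B + B + 1 = 0 := by rw [← pow_succ]; exact hB
    have hBq : B ^ q * B = B + 1 := by linear_combination hB' - (B + 1) * h2F
    set y : F := (B + 1)⁻¹ with hydef
    have hyB : y * (B + 1) = 1 := inv_mul_cancel₀ hB1ne
    have hy0 : y ≠ 0 := inv_ne_zero hB1ne
    have hx : (B ^ q + 1) * B = 1 := by linear_combination hBq + B * h2F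
    have hyq : y ^ q = B := by
      rw [hydef, inv_pow, hfrob, one_pow]
      exact inv_eq_of_mul_eq_one_right hx
    have hyrel : B * y = y + 1 := by linear_combination hyB - y * h2F
    have hCq : (y * y) ^ q = B * B := by rw [mul_pow, hyq]
    have hC : (y * y) ^ (q + 1) + (y * y) + 1 = 0 := by
      rw [pow_succ, hCq]
      linear_combination (B * y + y + 1) * hyrel + (y * y + y + 1) * h2F
    have hB1C1 : B ≠ y * y := by
      intro h
      apply hbad1
      have h4 : (y * (B + 1)) * (y * (B + 1)) = 1 := by rw [hyB]; ring
      have h5 : B * ((B + 1) * (B + 1)) = 1 := by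
        linear_combination h4 + ((B + 1) * (B + 1)) * h
      linear_combination h5 + (1 - B ^ 2) * h2F
    have hroot2B : (B⁻¹) ^ (q + 1) + (B⁻¹) ^ q + 1 = 0 := h2_root q B hB0 hB
    have hC2root : (y * y + 1) ^ (q + 1) + (y * y + 1) ^ q + 1 = 0 := by
      have e1 : (y * y + 1) ^ q = B * B + 1 := by rw [hfrob, one_pow, hCq]
      rw [pow_succ, e1]
      linear_combination (B * y + y + 1) * hyrel + (B * B + y * y + y + 2) * h2F
    have hB2C2 : B⁻¹ ≠ y * y + 1 := by
      intro h
      apply hbad2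
      have h5 : B * (y * y + 1) = 1 := by rw [← h, mul_inv_cancel₀ hB0]
      linear_combination ((B + 1) * (B + 1)) * h5 - B * (y * (B + 1) + 1) * hyB + h2F
    have hA1 : B * (y * y) ≠ 1 := by
      intro h
      apply hnocube B
      linear_combination (-((B + 1) * (B + 1))) * h + B * (y * (B + 1) + 1) * hyB
    have hnorm : (B * (y * y)) ^ (1 + q + q ^ 2) = 1 := by
      rw [mul_pow, norm_one q hq0 hfrob B hB, norm_one q hq0 hfrob (y * y) hC, one_mul]
    have hrep2 : B * (y * y) = B⁻¹ * (y * y + 1) := by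
      have h6 : B * (B * (y * y)) = y * y + 1 := by
        linear_combination (B * y + y + 1) * hyrel + y * h2F
      rw [← h6]
      field_simp
    exact ⟨B * (y * y), B, y * y, B⁻¹, y * y + 1, hnorm, hA1, hB1C1, hB, hC, rfl,
      hB2C2, hroot2B, hC2root, hrep2⟩
  · -- odd characteristic case
    have h10 : q - 1 ≠ 0 := by omega
    have hinv2 : ((2 : F)⁻¹) ≠ 0 := inv_ne_zero h2F
    have hc1 : (X ^ (q - 1) + C (2 : F) : Polynomial F) ≠ 0 := by
      intro h
      have he : Polynomial.eval 0 (X ^ (q - 1) + C (2 : F)) = 2 := by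
        simp [zero_pow h10]
      rw [h] at he
      simp only [eval_zero] at he
      exact h2F (by linear_combination -he)
    have hc2 : (X ^ (q - 1) + C ((2 : F)⁻¹) : Polynomial F) ≠ 0 := by
      intro h
      have he : Polynomial.eval 0 (X ^ (q - 1) + C ((2 : F)⁻¹)) = (2 : F)⁻¹ := by
        simp [zero_pow h10]
      rw [h] at he
      simp only [eval_zero] at he
      exact hinv2 (by linear_combination -he)
    have hG0 : (X * (X ^ (q - 1) + C (2 : F)) * (X ^ (q - 1) + C ((2 : F)⁻¹)) :
        Polynomial F) ≠ 0 := mul_ne_zero (mul_ne_zero X_ne_zero hc1) hc2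
    have hP1deg : (X ^ (q - 1) + C (2 : F) : Polynomial F).natDegree ≤ q - 1 := by
      refine le_trans (natDegree_add_le _ _) (max_le ?_ ?_)
      · exact le_of_eq (natDegree_X_pow _)
      · simp
    have hP2deg : (X ^ (q - 1) + C ((2 : F)⁻¹) : Polynomial F).natDegree ≤ q - 1 := by
      refine le_trans (natDegree_add_le _ _) (max_le ?_ ?_)
      · exact le_of_eq (natDegree_X_pow _)
      · simp
    have hGdeg : (X * (X ^ (q - 1) + C (2 : F)) * (X ^ (q - 1) + C ((2 : F)⁻¹)) :
        Polynomial F).natDegree ≤ 2 * q := by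
      refine le_trans (natDegree_mul_le) (le_trans (add_le_add
        (le_trans natDegree_mul_le (add_le_add natDegree_X_le hP1deg)) hP2deg) ?_)
      omega
    have hdeg : q * (X * (X ^ (q - 1) + C (2 : F)) * (X ^ (q - 1) + C ((2 : F)⁻¹)) :
        Polynomial F).natDegree < q ^ 3 := by
      have hqq : 0 < q * q := by positivity
      calc q * (X * (X ^ (q - 1) + C (2 : F)) * (X ^ (q - 1) + C ((2 : F)⁻¹)) :
          Polynomial F).natDegree ≤ q * (2 * q) := Nat.mul_le_mul_left _ hGdeg
        _ = 2 * (q * q) := by ring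
        _ < 3 * (q * q) := by omega
        _ ≤ q * (q * q) := Nat.mul_le_mul_right _ (by omega)
        _ = q ^ 3 := by ring
    obtain ⟨u, htr, heval⟩ := exists_good q hq2 hcard hfrob _ hG0 hdeg
    simp only [eval_mul, eval_add, eval_pow, eval_X, eval_C, ne_eq, mul_eq_zero,
      not_or] at heval
    obtain ⟨⟨hu0, hb1⟩, hb2⟩ := heval
    have hB := root_of_tr q hq2 u hu0 htr
    set B : F := u ^ (q - 1) with hBdef
    have hB0 : B ≠ 0 := pow_ne_zero _ hu0
    have h2B1 : 2 * B + 1 ≠ 0 := by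
      intro h
      apply hb2
      have e : B + (2 : F)⁻¹ = (2 : F)⁻¹ * (2 * B + 1) := by field_simp
      rw [e, h, mul_zero]
    have hB' : B ^ q * B + B + 1 = 0 := by rw [← pow_succ]; exact hB
    have hBq : B ^ q * B = -(B + 1) := by linear_combination hB'
    set Cc : F := -(B + 2) / (2 * B + 1) with hCdef0
    have hCrel : Cc * (2 * B + 1) = -(B + 2) := by
      rw [hCdef0]
      exact div_mul_cancel₀ _ h2B1
    have hden : (2 * B ^ q + 1) * B = -(B + 2) := by linear_combination 2 * hBq
    have hdenne : 2 * B ^ q + 1 ≠ 0 := by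
      intro h
      apply hb1
      rw [h, zero_mul] at hden
      linear_combination hden
    have hCqe : Cc ^ q = -(B ^ q + 2) / (2 * B ^ q + 1) := by
      rw [hCdef0, div_pow, hnegq, hfrob B 2, h2q, hfrob (2 * B) 1, one_pow, mul_pow, h2q]
    have hCq : Cc ^ q * (2 * B ^ q + 1) = -(B ^ q + 2) := by
      rw [hCqe]
      exact div_mul_cancel₀ _ hdenne
    have h4 : Cc ^ q * (B + 2) = B - 1 := by
      linear_combination (-B) * hCq + (2 * Cc ^ q + 1) * hBq
    have hCroot : Cc ^ q * Cc + Cc + 1 = 0 := by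
      have hT : (Cc ^ q * Cc + Cc + 1) * ((B + 2) * (2 * B + 1)) = 0 := by
        linear_combination (Cc * (2 * B + 1)) * h4 + (2 * B + 1) * hCrel
      exact (mul_eq_zero.mp hT).resolve_right (mul_ne_zero hb1 h2B1)
    have hC : Cc ^ (q + 1) + Cc + 1 = 0 := by rw [pow_succ]; exact hCroot
    have hC0 : Cc ≠ 0 := by
      intro h
      rw [h] at hCroot
      simp at hCroot
    have hD : (B * Cc) ^ (q + 1) + B * Cc + 1 = 0 := by
      rw [mul_pow, pow_succ, pow_succ]
      linear_combination (Cc ^ q * Cc) * hBq + (-(B + 1)) * hCroot + hCrel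
    have hD0 : B * Cc ≠ 0 := mul_ne_zero hB0 hC0
    set E : F := (B * Cc) ^ q with hEdef
    have hE : E ^ (q + 1) + E + 1 = 0 := hfrootq _ hD
    have hEq2 : (E ^ q) ^ (q + 1) + E ^ q + 1 = 0 := hfrootq _ hE
    have h1E : E ^ q * E + E + 1 = 0 := by rw [← pow_succ]; exact hE
    have h2E : E * (B * Cc) + B * Cc + 1 = 0 := by rw [hEdef, ← pow_succ]; exact hD
    have hADone : E * E ^ q * (B * Cc) = 1 := by
      linear_combination (B * Cc) * h1E - h2E
    have hB1C1 : E ≠ E ^ q := by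
      intro h
      apply hnocube E
      rw [← h] at h1E
      linear_combination h1E
    have hnormD : (B * Cc) ^ (1 + q + q ^ 2) = 1 := norm_one q hq0 hfrob _ hD
    have hnormA : (E * E ^ q) ^ (1 + q + q ^ 2) = 1 := by
      have h1 : (E * E ^ q) ^ (1 + q + q ^ 2) * (B * Cc) ^ (1 + q + q ^ 2) = 1 := by
        rw [← mul_pow, hADone, one_pow]
      rw [hnormD, mul_one] at h1
      exact h1
    have hAne1 : E * E ^ q ≠ 1 := by
      intro h
      rw [h, one_mul] at hADone
      rw [hADone] at hD
      exact h3F (by linear_combination hD)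
    have hrep2 : E * E ^ q = B⁻¹ * Cc⁻¹ := by
      have h7 : (B⁻¹ * Cc⁻¹) * (B * Cc) = 1 := by field_simp
      exact mul_right_cancel₀ hD0 (hADone.trans h7.symm)
    have hB2C2 : B⁻¹ ≠ Cc⁻¹ := by
      intro h
      have hBC : B = Cc := inv_injective h
      apply hnocube B
      rw [← hBC] at hCrel
      have h7 : (2 : F) * (B ^ 2 + B + 1) = 0 := by linear_combination hCrel
      exact (mul_eq_zero.mp h7).resolve_left h2F
    exact ⟨E * E ^ q, E, E ^ q, B⁻¹, Cc⁻¹, hnormA, hAne1, hB1C1, hE, hEq2, rfl,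
      hB2C2, h2_root q B hB0 hB, h2_root q Cc hC0 hC, hrep2⟩
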